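/- (Decomposition, stable case) Let C be an sᵢ-stable set of transpositions. Then H_C decomposes as an internal direct sum H_C = H_C^{∗sᵢ} ⊕ (xᵢ − x_{i+1})·H_C^{∗sᵢ} of ℂ[t₁,…,tₙ]-submodules, where H_C^{∗sᵢ} = {f ∈ H_C : f ∗ sᵢ = f}. -/
import Mathlib


open MvPolynomial

/-- The ring `H = Fun(Sₙ, ℂ[t₁,…,tₙ])`, with pointwise operations. -/
abbrev Hr (n : ℕ) := Equiv.Perm (Fin n) → MvPolynomial (Fin n) ℂ

/-- The element `xᵢ ∈ H`, given by `v ↦ t_{v(i)}`. -/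
noncomputable def xH {n : ℕ} (i : Fin n) : Hr n := fun v => X (v i)

/-- The element `tᵢ ∈ H`, the constant function `v ↦ tᵢ`. -/
noncomputable def tH {n : ℕ} (i : Fin n) : Hr n := fun _ => X i

/-- The right star action on `H`: `(g ∗ w)(v) = g(v w⁻¹)`. -/
noncomputable def starH {n : ℕ} (g : Hr n) (w : Equiv.Perm (Fin n)) : Hr n :=
  fun v => g (v * w⁻¹)

/-- The left dot action on `H`:
`(w · g)(v; t₁,…,tₙ) = g(w⁻¹ v; t_{w(1)},…,t_{w(n)})`. -/
noncomputable def dotH {n : ℕ} (w : Equiv.Perm (Fin n)) (g : Hr n) : Hr n :=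
  fun v => rename (⇑w) (g (w⁻¹ * v))


/-- `f` satisfies the divisibility condition `τ` for a transposition `τ = (j ↔ k)`:
`f − f∗τ` is a multiple of `xⱼ − xₖ` in `H` (i.e. pointwise, with quotients in
`ℂ[t₁,…,tₙ]`). -/
def condP {n : ℕ} (τ : Equiv.Perm (Fin n)) (f : Hr n) : Prop :=
  ∀ j k : Fin n, τ = Equiv.swap j k → (xH j - xH k) ∣ (f - starH f τ)

/-- The subring `H_C` of elements satisfying all conditions in a set `C` of
transpositions. -/
def HCset {n : ℕ} (C : Set (Equiv.Perm (Fin n))) : Set (Hr n) :=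
  {f | ∀ τ ∈ C, condP τ f}


/-! ### Auxiliary lemmas -/

/-- Substitution `X j ↦ X k` on `MvPolynomial`. -/
noncomputable def substA {n : ℕ} (j k : Fin n) :
    MvPolynomial (Fin n) ℂ →ₐ[ℂ] MvPolynomial (Fin n) ℂ :=
  aeval (fun i => if i = j then X k else X i)

lemma dvd_sub_substA {n : ℕ} (j k : Fin n) (p : MvPolynomial (Fin n) ℂ) :
    (X j - X k) ∣ (p - substA j k p) := by
  induction p using MvPolynomial.induction_on with
  | C r => simp [substA]
  | add p q hp hq =>
    have : p + q - substA j k (p + q) = (p - substA j k p) + (q - substA j k q) := by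
      simp [map_add]; ring
    rw [this]; exact dvd_add hp hq
  | mul_X p i hp =>
    have : p * X i - substA j k (p * X i)
        = (p - substA j k p) * X i + substA j k p * (X i - substA j k (X i)) := by
      simp [map_mul]; ring
    rw [this]
    refine dvd_add (Dvd.dvd.mul_right hp _) (Dvd.dvd.mul_left ?_ _)
    by_cases h : i = j
    · simp [substA, h]
    · simp [substA, h]

lemma substA_X_sub_X {n : ℕ} (j k : Fin n) :
    substA j k (X j - X k : MvPolynomial (Fin n) ℂ) = 0 := by
  simp [substA]

lemma dvd_iff_substA {n : ℕ} (j k : Fin n) (p : MvPolynomial (Fin n) ℂ) :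
    (X j - X k) ∣ p ↔ substA j k p = 0 := by
  constructor
  · rintro ⟨q, rfl⟩
    rw [map_mul, substA_X_sub_X, zero_mul]
  · intro h
    have := dvd_sub_substA j k p
    rwa [h, sub_zero] at this

lemma coprime_cancel {n : ℕ} {a b j k : Fin n} (hab : a ≠ b)
    (h1 : ¬(a = j ∧ b = k)) (h2 : ¬(a = k ∧ b = j))
    {p : MvPolynomial (Fin n) ℂ}
    (h : (X j - X k) ∣ (X a - X b) * p) : (X j - X k) ∣ p := by
  rw [dvd_iff_substA] at h ⊢
  rw [map_mul] at h
  rcases mul_eq_zero.mp h with h0 | h0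
  · exfalso
    have heq : substA j k (X a - X b : MvPolynomial (Fin n) ℂ)
        = X (if a = j then k else a) - X (if b = j then k else b) := by
      simp only [substA, map_sub, aeval_X]
      split_ifs <;> rfl
    rw [heq] at h0
    have hne : (if a = j then k else a) ≠ (if b = j then k else b) := by
      split_ifs with h3 h4 h4
      · exact absurd (h3.trans h4.symm) hab
      · intro h5; exact h1 ⟨h3, h5.symm⟩
      · intro h5; exact h2 ⟨h5, h4⟩
      · exact hab
    exact (sub_ne_zero.mpr (fun h5 => hne (MvPolynomial.X_injective h5))) h0
  · exact h0

lemma starH_sub {n : ℕ} (f g : Hr n) (w : Equiv.Perm (Fin n)) :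
    starH (f - g) w = starH f w - starH g w := rfl

lemma starH_add {n : ℕ} (f g : Hr n) (w : Equiv.Perm (Fin n)) :
    starH (f + g) w = starH f w + starH g w := rfl

lemma starH_mul {n : ℕ} (f g : Hr n) (w : Equiv.Perm (Fin n)) :
    starH (f * g) w = starH f w * starH g w := rfl

lemma starH_one {n : ℕ} (f : Hr n) : starH f 1 = f := by
  funext v; simp [starH]

lemma starH_starH {n : ℕ} (f : Hr n) (u w : Equiv.Perm (Fin n)) :
    starH (starH f u) w = starH f (u * w) := by
  funext v; simp [starH, mul_assoc]

lemma starH_swap_xH {n : ℕ} (c d e : Fin n) :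
    starH (xH e) (Equiv.swap c d) = xH (Equiv.swap c d e) := by
  show xH ((Equiv.swap c d)⁻¹ e) = _
  rw [Equiv.swap_inv]

lemma dvd_Hr_iff {n : ℕ} (c d : Fin n) (F : Hr n) :
    (xH c - xH d) ∣ F ↔ ∀ v : Equiv.Perm (Fin n), (X (v c) - X (v d)) ∣ F v := by
  constructor
  · rintro ⟨q, rfl⟩ v; exact ⟨q v, rfl⟩
  · intro h; choose q hq using h; exact ⟨q, funext fun v => hq v⟩

lemma dvd_xH_swap {n : ℕ} (j k e : Fin n) :
    (xH j - xH k : Hr n) ∣ (xH e - xH (Equiv.swap j k e)) := by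
  by_cases h1 : e = j
  · subst h1; rw [Equiv.swap_apply_left]
  · by_cases h2 : e = k
    · subst h2
      rw [Equiv.swap_apply_right, ← dvd_neg, neg_sub]
    · rw [Equiv.swap_apply_of_ne_of_ne h1 h2, sub_self]
      exact dvd_zero _

lemma key_dvd {n : ℕ} (a b j k : Fin n) :
    (xH j - xH k : Hr n) ∣
      ((xH a - xH b) - starH (xH a - xH b) (Equiv.swap j k)) := by
  rw [starH_sub, starH_swap_xH, starH_swap_xH]
  have : (xH a - xH b) - (xH (Equiv.swap j k a) - xH (Equiv.swap j k b))
      = (xH a - xH (Equiv.swap j k a)) - (xH b - xH (Equiv.swap j k b)) := by ring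
  rw [this]
  exact dvd_sub (dvd_xH_swap j k a) (dvd_xH_swap j k b)

lemma HCset_sub {n : ℕ} {Cs : Set (Equiv.Perm (Fin n))} {f g : Hr n}
    (hf : f ∈ HCset Cs) (hg : g ∈ HCset Cs) : f - g ∈ HCset Cs := by
  intro τ hτ j k hjk
  have : (f - g) - starH (f - g) τ = (f - starH f τ) - (g - starH g τ) := by
    rw [starH_sub]; ring
  rw [this]
  exact dvd_sub (hf τ hτ j k hjk) (hg τ hτ j k hjk)

lemma HCset_add {n : ℕ} {Cs : Set (Equiv.Perm (Fin n))} {f g : Hr n}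
    (hf : f ∈ HCset Cs) (hg : g ∈ HCset Cs) : f + g ∈ HCset Cs := by
  intro τ hτ j k hjk
  have : (f + g) - starH (f + g) τ = (f - starH f τ) + (g - starH g τ) := by
    rw [starH_add]; ring
  rw [this]
  exact dvd_add (hf τ hτ j k hjk) (hg τ hτ j k hjk)

/-- The constant `c` as an element of `Hr n`. -/
noncomputable def cH {n : ℕ} (c : ℂ) : Hr n := fun _ => MvPolynomial.C c

lemma starH_cH {n : ℕ} (c : ℂ) (w : Equiv.Perm (Fin n)) : starH (cH c) w = cH c := rfl

lemma HCset_const_mul {n : ℕ} {Cs : Set (Equiv.Perm (Fin n))} (c : ℂ) {f : Hr n}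
    (hf : f ∈ HCset Cs) : cH c * f ∈ HCset Cs := by
  intro τ hτ j k hjk
  have : cH c * f - starH (cH c * f) τ = cH c * (f - starH f τ) := by
    rw [starH_mul, starH_cH]; ring
  rw [this]
  exact Dvd.dvd.mul_left (hf τ hτ j k hjk) _

lemma swap_conj {n : ℕ} (a b j k : Fin n) :
    Equiv.swap a b * Equiv.swap j k * Equiv.swap a b
      = Equiv.swap (Equiv.swap a b j) (Equiv.swap a b k) := by
  have h := Equiv.swap_apply_apply (Equiv.swap a b) j k
  rw [Equiv.swap_inv] at h
  exact h.symm

lemma ne_of_isSwap_eq_swap {n : ℕ} {τ : Equiv.Perm (Fin n)} {j k : Fin n}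
    (hτ : τ.IsSwap) (h : τ = Equiv.swap j k) : j ≠ k := by
  rintro rfl
  obtain ⟨x, y, hxy, hτ'⟩ := hτ
  rw [Equiv.swap_self] at h
  rw [h] at hτ'
  have := congrArg (fun σ : Equiv.Perm (Fin n) => σ x) hτ'
  simp at this
  exact hxy this

lemma HCset_star_swap {n : ℕ} {Cs : Set (Equiv.Perm (Fin n))} {a b : Fin n}
    (hstab : ∀ τ, τ ∈ Cs ↔ Equiv.swap a b * τ * Equiv.swap a b ∈ Cs)
    {f : Hr n} (hf : f ∈ HCset Cs) : starH f (Equiv.swap a b) ∈ HCset Cs := by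
  intro τ hτ j k hjk
  have hτ' : Equiv.swap a b * τ * Equiv.swap a b ∈ Cs := (hstab τ).mp hτ
  have hτ'eq : Equiv.swap a b * τ * Equiv.swap a b
      = Equiv.swap (Equiv.swap a b j) (Equiv.swap a b k) := by
    rw [hjk, swap_conj]
  obtain ⟨q, hq⟩ := hf _ hτ' _ _ hτ'eq
  have h1 : starH f (Equiv.swap a b) - starH (starH f (Equiv.swap a b)) τ
      = starH (f - starH f (Equiv.swap a b * τ * Equiv.swap a b)) (Equiv.swap a b) := by
    rw [starH_sub, starH_starH, starH_starH]
    congr 2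
    rw [mul_assoc, Equiv.swap_mul_self, mul_one]
  rw [h1, hq, starH_mul, starH_sub, starH_swap_xH, starH_swap_xH,
    Equiv.swap_apply_self, Equiv.swap_apply_self]
  exact Dvd.intro _ rfl


/-- Decomposition, stable case: for an `s`-stable set `C`
(`s = swap a b ∈ C`, `b = a + 1`, `sCs = C`), every `f ∈ HCset C` decomposes
uniquely as `f = g + (xH a - xH b) * h` with both `g` and `h` in
`{f ∈ HCset C : f ∗ s = f}`; this is the internal direct sum decomposition
of `HCset C` as fixed part plus `(xH a - xH b)` times the fixed part. -/
theorem stable_decomposition (n : ℕ) (a b : Fin n) (hab : (a : ℕ) + 1 = b)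
    (C : Set (Equiv.Perm (Fin n)))
    (hC : ∀ τ ∈ C, Equiv.Perm.IsSwap τ)
    (hs : Equiv.swap a b ∈ C)
    (hstab : ∀ τ, τ ∈ C ↔ Equiv.swap a b * τ * Equiv.swap a b ∈ C) :
    ∀ f ∈ HCset C, ∃! p : Hr n × Hr n,
      (p.1 ∈ HCset C ∧ starH p.1 (Equiv.swap a b) = p.1) ∧
      (p.2 ∈ HCset C ∧ starH p.2 (Equiv.swap a b) = p.2) ∧
      f = p.1 + (xH a - xH b) * p.2 := by
  intro f hf
  have hne : a ≠ b := by
    intro h; rw [h] at hab; omega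
  -- regularity of (xH a - xH b)
  have hXreg : ∀ u w : Hr n, (xH a - xH b) * u = (xH a - xH b) * w → u = w := by
    intro u w h
    funext v
    have hv := congrFun h v
    have hx : (X (v a) - X (v b) : MvPolynomial (Fin n) ℂ) ≠ 0 :=
      sub_ne_zero.mpr (fun he => hne (v.injective (MvPolynomial.X_injective he)))
    exact mul_left_cancel₀ hx hv
  have hXs : starH (xH a - xH b) (Equiv.swap a b) = -(xH a - xH b) := by
    rw [starH_sub, starH_swap_xH, starH_swap_xH, Equiv.swap_apply_left,
      Equiv.swap_apply_right]
    ring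
  obtain ⟨q, hq⟩ := hf _ hs a b rfl
  have hfs : starH f (Equiv.swap a b) ∈ HCset C := HCset_star_swap hstab hf
  -- q is s-invariant
  have hqs : starH q (Equiv.swap a b) = q := by
    apply hXreg
    have h4 := congrArg (fun g => starH g (Equiv.swap a b)) hq
    simp only [starH_sub, starH_mul, starH_starH, Equiv.swap_mul_self, starH_one,
      hXs] at h4
    -- h4 : starH f s - f = -(xH a - xH b) * starH q s
    linear_combination h4 + hq
  -- q ∈ HCset C
  have hXq : (xH a - xH b) * q ∈ HCset C := by
    rw [← hq]; exact HCset_sub hf hfs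
  have hqC : q ∈ HCset C := by
    intro τ hτ j k hjk
    have hjkne : j ≠ k := ne_of_isSwap_eq_swap (hC τ hτ) hjk
    by_cases hcase : (a = j ∧ b = k) ∨ (a = k ∧ b = j)
    · have hts : τ = Equiv.swap a b := by
        rcases hcase with ⟨h1, h2⟩ | ⟨h1, h2⟩ <;> subst h1 <;> subst h2
        · exact hjk
        · rw [hjk, Equiv.swap_comm]
      rw [hts, hqs, sub_self]
      exact dvd_zero _
    · have h1 : ¬(a = j ∧ b = k) := fun hc => hcase (Or.inl hc)
      have h2 : ¬(a = k ∧ b = j) := fun hc => hcase (Or.inr hc)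
      have hd1 := hXq τ hτ j k hjk
      have hkey : (xH j - xH k : Hr n) ∣ ((xH a - xH b) - starH (xH a - xH b) τ) := by
        rw [hjk]; exact key_dvd a b j k
      have hd2 : (xH j - xH k : Hr n) ∣ (xH a - xH b) * (q - starH q τ) := by
        have heq : (xH a - xH b) * (q - starH q τ)
            = ((xH a - xH b) * q - starH ((xH a - xH b) * q) τ)
              - ((xH a - xH b) - starH (xH a - xH b) τ) * starH q τ := by
          rw [starH_mul]; ring
        rw [heq]
        exact dvd_sub hd1 (Dvd.dvd.mul_right hkey _)
      rw [dvd_Hr_iff] at hd2 ⊢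
      intro v
      refine coprime_cancel (v.injective.ne hne) ?_ ?_ (hd2 v)
      · rintro ⟨e1, e2⟩
        rcases not_and_or.mp h1 with h | h
        · exact h (v.injective e1)
        · exact h (v.injective e2)
      · rintro ⟨e1, e2⟩
        rcases not_and_or.mp h2 with h | h
        · exact h (v.injective e1)
        · exact h (v.injective e2)
  -- the decomposition
  obtain ⟨g, hgdef⟩ : ∃ g : Hr n, g = cH 2⁻¹ * (f + starH f (Equiv.swap a b)) :=
    ⟨_, rfl⟩
  obtain ⟨h, hhdef⟩ : ∃ h : Hr n, h = cH 2⁻¹ * q := ⟨_, rfl⟩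
  have hgC : g ∈ HCset C := hgdef ▸ HCset_const_mul _ (HCset_add hf hfs)
  have hhC : h ∈ HCset C := hhdef ▸ HCset_const_mul _ hqC
  have hgs : starH g (Equiv.swap a b) = g := by
    rw [hgdef, starH_mul, starH_cH, starH_add, starH_starH, Equiv.swap_mul_self,
      starH_one]
    ring
  have hhs : starH h (Equiv.swap a b) = h := by
    rw [hhdef, starH_mul, starH_cH, hqs]
  have h2half : (cH (2⁻¹ : ℂ) : Hr n) * 2 = 1 := by
    funext v
    show (MvPolynomial.C (2⁻¹ : ℂ)) * 2 = 1
    rw [← map_ofNat (MvPolynomial.C : ℂ →+* MvPolynomial (Fin n) ℂ) 2, ← map_mul]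
    norm_num
  have hdecomp : f = g + (xH a - xH b) * h := by
    rw [hgdef, hhdef]
    have : cH 2⁻¹ * (f + starH f (Equiv.swap a b)) + (xH a - xH b) * (cH 2⁻¹ * q)
        = cH 2⁻¹ * ((f + starH f (Equiv.swap a b)) + (f - starH f (Equiv.swap a b))) := by
      rw [hq]; ring
    rw [this]
    have h2 : (f + starH f (Equiv.swap a b)) + (f - starH f (Equiv.swap a b))
        = 2 * f := by ring
    rw [h2, ← mul_assoc, h2half, one_mul]
  refine ⟨(g, h), ⟨⟨hgC, hgs⟩, ⟨hhC, hhs⟩, hdecomp⟩, ?_⟩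
  rintro ⟨g', h'⟩ ⟨⟨hg'C, hg's⟩, ⟨hh'C, hh's⟩, hfeq⟩
  have e1 : g' + (xH a - xH b) * h' = g + (xH a - xH b) * h := by
    rw [← hfeq, ← hdecomp]
  have e2 : g' - (xH a - xH b) * h' = g - (xH a - xH b) * h := by
    have h4 := congrArg (fun g0 => starH g0 (Equiv.swap a b)) e1
    simp only [starH_add, starH_mul, hXs, hg's, hh's, hgs, hhs] at h4
    linear_combination h4
  have e3 : h' = h := by
    have e4 : (xH a - xH b) * (h' + h') = (xH a - xH b) * (h + h) := by
      linear_combination e1 - e2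
    have e5 := hXreg _ _ e4
    funext v
    have e6 := congrFun e5 v
    have : (2 : MvPolynomial (Fin n) ℂ) * h' v = 2 * h v := by
      have : h' v + h' v = h v + h v := e6
      linear_combination this
    exact mul_left_cancel₀ two_ne_zero this
  have e7 : g' = g := by
    rw [e3] at e1
    exact add_right_cancel e1
  rw [e3, e7]
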